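/- Let X = {(0,0)} ∪ ⋃_{n∈ℕ} {z ∈ ℝ² : ‖z‖ = e^{−n}}, equipped with the Euclidean metric, and let φ : ℝ × X → X be the rotation flow φ_t(x,y) = (x cos t − y sin t, x sin t + y cos t). Then φ is a well-defined singular-expansive flow on X, and the set of periodic orbits of φ of period 2π is infinite (every point of X other than the origin is a periodic point of least period 2π, and these points lie on infinitely many distinct orbits). -/

import Mathlib

open Set Metric Filter
open scoped Classical

variable {X : Type*}

/-- A (continuous) flow on a topological space, given as a map `φ : ℝ → X → X`. -/
def IsFlowMap [TopologicalSpace X] (φ : ℝ → X → X) : Prop :=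
  Continuous (fun p : ℝ × X => φ p.1 p.2) ∧ (∀ x : X, φ 0 x = x) ∧
    ∀ t s : ℝ, ∀ x : X, φ (t + s) x = φ t (φ s x)

/-- The singular set of a flow. -/
def SingSet (φ : ℝ → X → X) : Set X := {x : X | ∀ t : ℝ, φ t x = x}

/-- An increasing homeomorphism of `ℝ`: a strictly increasing continuous bijection. -/
def IncreasingHomeo (s : ℝ → ℝ) : Prop :=
  Continuous s ∧ StrictMono s ∧ Function.Bijective s

/-- Distance from a point to a set, with the convention that the distance
to the empty set is the diameter of the whole space. -/
noncomputable def distToSet [MetricSpace X] (z : X) (A : Set X) : ℝ :=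
  if A = ∅ then Metric.diam (Set.univ : Set X) else Metric.infDist z A

/-- The orbit of a point under a flow. -/
def flowOrbit (φ : ℝ → X → X) (x : X) : Set X := Set.range fun t : ℝ => φ t x

/-- Singular expansivity of a flow on a subset `Λ`. -/
def SingularExpansiveOn [MetricSpace X] (φ : ℝ → X → X) (Λ : Set X) : Prop :=
  ∀ ε > (0:ℝ), ∃ δ > (0:ℝ), ∀ x ∈ Λ, ∀ y ∈ Λ, ∀ s : ℝ → ℝ, IncreasingHomeo s →
    (∀ t : ℝ, dist (φ t x) (φ (s t) y) ≤ δ * distToSet (φ t x) (SingSet φ)) →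
    ∃ t₀ : ℝ, ∃ τ ∈ Set.Icc (t₀ - ε) (t₀ + ε), φ (s t₀) y = φ τ x

/-- The subset of the plane (identified with `ℂ`) consisting of the origin together
with the circles of radius `e^{-n}`, `n ∈ ℕ`, centered at the origin. -/
def circlesExp : Set ℂ :=
  {0} ∪ ⋃ n : ℕ, {z : ℂ | ‖z‖ = Real.exp (-(n : ℝ))}

lemma rot_mem_circlesExp (t : ℝ) (z : ℂ) (hz : z ∈ circlesExp) :
    Complex.exp (t * Complex.I) * z ∈ circlesExp := by
  rcases hz with hz | hz
  · simp only [Set.mem_singleton_iff] at hz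
    left
    simp [hz]
  · right
    simp only [Set.mem_iUnion, Set.mem_setOf_eq] at hz ⊢
    obtain ⟨n, hn⟩ := hz
    refine ⟨n, ?_⟩
    rw [norm_mul, Complex.norm_exp_ofReal_mul_I, one_mul]
    exact hn

/-- The rotation flow on `circlesExp`. -/
noncomputable def rotFlowExp : ℝ → circlesExp → circlesExp := fun t z =>
  ⟨Complex.exp (t * Complex.I) * (z : ℂ), rot_mem_circlesExp t z z.2⟩

section Aux

lemma zero_mem_circlesExp : (0:ℂ) ∈ circlesExp := Or.inl rfl

noncomputable def origPt : circlesExp := ⟨0, zero_mem_circlesExp⟩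

lemma rotFlowExp_coe (t : ℝ) (x : circlesExp) :
    (rotFlowExp t x : ℂ) = Complex.exp (t * Complex.I) * (x : ℂ) := rfl

lemma rotFlowExp_zero (x : circlesExp) : rotFlowExp 0 x = x := by
  apply Subtype.ext
  rw [rotFlowExp_coe]
  simp

lemma abs_rotFlowExp (t : ℝ) (x : circlesExp) :
    ‖(rotFlowExp t x : ℂ)‖ = ‖(x : ℂ)‖ := by
  rw [rotFlowExp_coe, norm_mul, Complex.norm_exp_ofReal_mul_I, one_mul]

lemma singSet_rotFlowExp : SingSet rotFlowExp = {origPt} := by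
  ext x
  constructor
  · intro hx
    have h := congrArg Subtype.val (hx Real.pi)
    rw [rotFlowExp_coe, Complex.exp_pi_mul_I] at h
    have hx0 : (x:ℂ) = 0 := by
      have h2 : (x:ℂ) + (x:ℂ) = 0 := by linear_combination -h
      exact add_self_eq_zero.mp h2
    exact Set.mem_singleton_iff.2 (Subtype.ext hx0)
  · rintro rfl t
    apply Subtype.ext
    rw [rotFlowExp_coe]
    simp [origPt]

lemma distToSet_rotFlowExp (z : circlesExp) :
    distToSet z (SingSet rotFlowExp) = ‖(z : ℂ)‖ := by
  rw [singSet_rotFlowExp, distToSet, if_neg (Set.singleton_ne_empty _),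
    Metric.infDist_singleton, Subtype.dist_eq]
  simp [origPt, Complex.dist_eq]

lemma chord_lower_bound (θ : ℝ) (hθ : |θ| ≤ Real.pi) :
    2 / Real.pi * |θ| ≤ ‖Complex.exp (θ * Complex.I) - 1‖ := by
  have hpi := Real.pi_pos
  have hsq : ‖Complex.exp (↑θ * Complex.I) - 1‖ ^ 2 = 2 - 2 * Real.cos θ := by
    rw [Complex.sq_norm, Complex.normSq_apply]
    simp only [Complex.sub_re, Complex.sub_im, Complex.exp_ofReal_mul_I_re,
      Complex.exp_ofReal_mul_I_im, Complex.one_re, Complex.one_im, sub_zero]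
    nlinarith [Real.sin_sq_add_cos_sq θ]
  have hs : Real.sin (|θ| / 2) ^ 2 = (2 - 2 * Real.cos θ) / 4 := by
    have h := Real.sin_sq_eq_half_sub (|θ| / 2)
    rw [show 2 * (|θ| / 2) = |θ| by ring, Real.cos_abs] at h
    rw [h]; ring
  have h1 : 2 / Real.pi * (|θ| / 2) ≤ Real.sin (|θ| / 2) :=
    Real.mul_le_sin (by positivity) (by linarith)
  have habs : 0 ≤ ‖Complex.exp (↑θ * Complex.I) - 1‖ := norm_nonneg _
  nlinarith [abs_nonneg θ, sq_nonneg (Real.sin (|θ|/2) - ‖Complex.exp (↑θ * Complex.I) - 1‖)]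

lemma periodic_props (x : circlesExp) (hx : (x:ℂ) ≠ 0) :
    x ∉ SingSet rotFlowExp ∧ rotFlowExp (2 * Real.pi) x = x ∧
      ∀ τ : ℝ, 0 < τ → rotFlowExp τ x = x → 2 * Real.pi ≤ τ := by
  refine ⟨?_, ?_, ?_⟩
  · rw [singSet_rotFlowExp]
    intro h
    exact hx (by rw [Set.mem_singleton_iff.mp h]; rfl)
  · apply Subtype.ext
    rw [rotFlowExp_coe]
    push_cast
    rw [show ((2:ℂ) * Real.pi) * Complex.I = 2 * Real.pi * Complex.I by ring,
      Complex.exp_two_pi_mul_I, one_mul]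
  · intro τ hτ h
    have h' : Complex.exp (↑τ * Complex.I) * (x:ℂ) = 1 * (x:ℂ) := by
      rw [one_mul]; exact congrArg Subtype.val h
    have h1 : Complex.exp (↑τ * Complex.I) = 1 := mul_right_cancel₀ hx h'
    obtain ⟨n, hn⟩ := Complex.exp_eq_one_iff.mp h1
    have h2 : (τ:ℂ) * Complex.I = ((n:ℂ) * (2 * Real.pi)) * Complex.I := by
      rw [hn]; ring
    have h3 : (τ:ℂ) = (n:ℂ) * (2 * Real.pi) := mul_right_cancel₀ Complex.I_ne_zero h2
    have h4 : τ = (n:ℝ) * (2 * Real.pi) := by exact_mod_cast h3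
    have hpi := Real.pi_pos
    have hn1 : (1:ℤ) ≤ n := by
      by_contra hcon
      push_neg at hcon
      have : (n:ℝ) ≤ 0 := by exact_mod_cast Int.lt_add_one_iff.mp (by omega : n < 0 + 1)
      nlinarith
    have : (1:ℝ) ≤ (n:ℝ) := by exact_mod_cast hn1
    nlinarith

lemma singExp_rotFlowExp : SingularExpansiveOn rotFlowExp Set.univ := by
  intro ε hε
  have hpi := Real.pi_pos
  have he1 : Real.exp (-1 : ℝ) < 1 := Real.exp_lt_one_iff.mpr (by norm_num)
  set δ := min (2 * ε / Real.pi) ((1 - Real.exp (-1)) / 2) with hδdef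
  have hδpos : 0 < δ := lt_min (by positivity) (by linarith)
  refine ⟨δ, hδpos, ?_⟩
  intro x _ y _ s hs hcl
  have h0 := hcl 0
  rw [rotFlowExp_zero, distToSet_rotFlowExp] at h0
  set w := rotFlowExp (s 0) y with hw
  by_cases hx : (x:ℂ) = 0
  · have hd : dist x w ≤ 0 := by
      simpa [hx] using h0
    have hwx : x = w := dist_le_zero.mp hd
    exact ⟨0, 0, ⟨by linarith, by linarith⟩, by rw [← hw, ← hwx, rotFlowExp_zero]⟩
  · -- |w| = |y|
    have habsw : ‖(w:ℂ)‖ = ‖(y:ℂ)‖ := abs_rotFlowExp _ _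
    have hxpos : 0 < ‖(x:ℂ)‖ := by
      simpa using (norm_pos_iff.mpr hx)
    have hdist : ‖(x:ℂ) - (w:ℂ)‖ ≤ δ * ‖(x:ℂ)‖ := by
      rwa [Subtype.dist_eq, Complex.dist_eq] at h0
    -- |y| = |x|
    have habseq : ‖(y:ℂ)‖ = ‖(x:ℂ)‖ := by
      have hdiff : |‖(x:ℂ)‖ - ‖(w:ℂ)‖| ≤ δ * ‖(x:ℂ)‖ := by
        calc |‖(x:ℂ)‖ - ‖(w:ℂ)‖| = |‖(x:ℂ)‖ - ‖(w:ℂ)‖| := rfl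
          _ ≤ ‖(x:ℂ) - (w:ℂ)‖ := abs_norm_sub_norm_le _ _
          _ = ‖(x:ℂ) - (w:ℂ)‖ := rfl
          _ ≤ δ * ‖(x:ℂ)‖ := hdist
      rw [habsw] at hdiff
      by_contra hne
      -- x is on some circle
      obtain ⟨nx, hnx⟩ : ∃ n : ℕ, ‖(x:ℂ)‖ = Real.exp (-(n:ℝ)) := by
        rcases x.2 with h | h
        · exact absurd (Set.mem_singleton_iff.mp h) hx
        · obtain ⟨n, hn⟩ := Set.mem_iUnion.mp h
          exact ⟨n, hn⟩
      have hδlt : δ * ‖(x:ℂ)‖ < (1 - Real.exp (-1)) * ‖(x:ℂ)‖ := by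
        have : δ < 1 - Real.exp (-1) := lt_of_le_of_lt (min_le_right _ _) (by linarith)
        nlinarith
      have hgap : (1 - Real.exp (-1)) * ‖(x:ℂ)‖ ≤
          |‖(x:ℂ)‖ - ‖(y:ℂ)‖| := by
        rcases y.2 with h | h
        · rw [Set.mem_singleton_iff.mp h]
          simp only [norm_zero, sub_zero]
          rw [abs_of_pos hxpos]
          nlinarith [Real.exp_pos (-1 : ℝ)]
        · obtain ⟨m, hm⟩ := Set.mem_iUnion.mp h
          rw [hnx, hm] at hne ⊢
          have hmn : m ≠ nx := fun hc => hne (by rw [hc])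
          rcases lt_or_gt_of_ne hmn with hlt | hgt
          · -- m < nx : exp(-m) ≥ e * exp(-nx)
            have : Real.exp (-(nx:ℝ)) * Real.exp 1 ≤ Real.exp (-(m:ℝ)) := by
              rw [← Real.exp_add]
              apply Real.exp_le_exp.mpr
              have : (m:ℝ) + 1 ≤ (nx:ℝ) := by exact_mod_cast hlt
              linarith
            have he2 : (2:ℝ) ≤ Real.exp 1 := by
              have := Real.add_one_le_exp (1:ℝ); linarith
            have habs : Real.exp (-(m:ℝ)) - Real.exp (-(nx:ℝ)) ≤
                |Real.exp (-(nx:ℝ)) - Real.exp (-(m:ℝ))| := by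
              rw [abs_sub_comm]; exact le_abs_self _
            nlinarith [Real.exp_pos (-(nx:ℝ)), Real.exp_pos (-1:ℝ),
              Real.exp_pos (1:ℝ), Real.exp_neg (1:ℝ)]
          · -- m > nx : exp(-m) ≤ exp(-1) * exp(-nx)
            have : Real.exp (-(m:ℝ)) ≤ Real.exp (-(nx:ℝ)) * Real.exp (-1) := by
              rw [← Real.exp_add]
              apply Real.exp_le_exp.mpr
              have : (nx:ℝ) + 1 ≤ (m:ℝ) := by exact_mod_cast hgt
              linarith
            have habs : Real.exp (-(nx:ℝ)) - Real.exp (-(m:ℝ)) ≤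
                |Real.exp (-(nx:ℝ)) - Real.exp (-(m:ℝ))| := le_abs_self _
            nlinarith [Real.exp_pos (-(nx:ℝ))]
      linarith [lt_of_le_of_lt (hgap.trans hdiff) hδlt]
    -- same circle: extract the angle
    set z : ℂ := (w:ℂ) / (x:ℂ) with hz
    have habsz : ‖z‖ = 1 := by
      rw [hz, norm_div, habsw, habseq, div_self hxpos.ne']
    set θ := Complex.arg z with hθ
    have hexp : Complex.exp (↑θ * Complex.I) = z := by
      have := Complex.norm_mul_exp_arg_mul_I z
      rwa [habsz, Complex.ofReal_one, one_mul] at this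
    have hwz : (w:ℂ) = Complex.exp (↑θ * Complex.I) * (x:ℂ) := by
      rw [hexp, hz, div_mul_cancel₀ _ hx]
    -- chord bound
    have hchord : ‖Complex.exp (↑θ * Complex.I) - 1‖ ≤ δ := by
      have hkey : ‖(x:ℂ) - (w:ℂ)‖ =
          ‖Complex.exp (↑θ * Complex.I) - 1‖ * ‖(x:ℂ)‖ := by
        rw [norm_sub_rev, hwz, ← norm_mul]
        congr 1
        ring
      rw [hkey] at hdist
      exact le_of_mul_le_mul_right (by linarith) hxpos
    have hθpi : |θ| ≤ Real.pi := Complex.abs_arg_le_pi z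
    have hθε : |θ| ≤ ε := by
      have hlow := chord_lower_bound θ hθpi
      have hδε : δ ≤ 2 * ε / Real.pi := min_le_left _ _
      have h5 : 2 / Real.pi * |θ| ≤ 2 * ε / Real.pi := le_trans (hlow.trans hchord) hδε
      have h6 := mul_le_mul_of_nonneg_right h5 hpi.le
      field_simp at h6
      linarith
    rw [abs_le] at hθε
    exact ⟨0, θ, ⟨by linarith [hθε.1], by linarith [hθε.2]⟩, Subtype.ext hwz⟩

end Aux

noncomputable def ptN (n : ℕ) : circlesExp :=
  ⟨((Real.exp (-(n:ℝ)) : ℝ) : ℂ), Or.inr (Set.mem_iUnion.2 ⟨n, by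
    show ‖_‖ = _
    rw [Complex.norm_real, Real.norm_eq_abs, abs_of_pos (Real.exp_pos _)]⟩)⟩

lemma ptN_ne_zero (n : ℕ) : (ptN n : ℂ) ≠ 0 :=
  Complex.ofReal_ne_zero.mpr (Real.exp_pos _).ne'

lemma abs_ptN (n : ℕ) : ‖(ptN n : ℂ)‖ = Real.exp (-(n:ℝ)) := by
  rw [show ((ptN n : ℂ)) = ((Real.exp (-(n:ℝ)) : ℝ) : ℂ) from rfl, Complex.norm_real, Real.norm_eq_abs,
    abs_of_pos (Real.exp_pos _)]

/-- The rotation flow on the union of the origin and the circles of radii `e^{-n}` is a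
well-defined singular-expansive flow having infinitely many periodic orbits of
(least) period `2π`: indeed, every point other than the origin is a periodic point of
least period `2π`. -/
theorem rotation_flow_on_exp_circles_singular_expansive_infinitely_many_periodic_orbits :
    IsFlowMap rotFlowExp ∧
    SingularExpansiveOn rotFlowExp Set.univ ∧
    (∀ x : circlesExp, (x : ℂ) ≠ 0 →
      x ∉ SingSet rotFlowExp ∧ rotFlowExp (2 * Real.pi) x = x ∧
        ∀ τ : ℝ, 0 < τ → rotFlowExp τ x = x → 2 * Real.pi ≤ τ) ∧
    Set.Infinite {O : Set circlesExp | ∃ x : circlesExp,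
      x ∉ SingSet rotFlowExp ∧ rotFlowExp (2 * Real.pi) x = x ∧
      (∀ τ : ℝ, 0 < τ → rotFlowExp τ x = x → 2 * Real.pi ≤ τ) ∧
      O = flowOrbit rotFlowExp x} := by
  refine ⟨⟨?_, ?_, ?_⟩, singExp_rotFlowExp, fun x hx => periodic_props x hx, ?_⟩
  · apply Continuous.subtype_mk
    exact (Complex.continuous_exp.comp (by fun_prop)).mul
      (continuous_subtype_val.comp continuous_snd)
  · exact rotFlowExp_zero
  · intro t s x
    apply Subtype.ext
    rw [rotFlowExp_coe, rotFlowExp_coe, rotFlowExp_coe]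
    push_cast
    rw [add_mul, Complex.exp_add]
    ring
  · refine Set.infinite_of_injective_forall_mem
      (f := fun n : ℕ => flowOrbit rotFlowExp (ptN n)) ?_ ?_
    · intro n m h
      have h' : flowOrbit rotFlowExp (ptN n) = flowOrbit rotFlowExp (ptN m) := h
      have hmem : ptN n ∈ flowOrbit rotFlowExp (ptN m) := by
        rw [← h']
        exact ⟨0, rotFlowExp_zero _⟩
      obtain ⟨t, ht⟩ := hmem
      have h2 := congrArg (fun u : circlesExp => ‖(u:ℂ)‖) ht
      simp only [abs_rotFlowExp, abs_ptN] at h2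
      have h3 : -(m:ℝ) = -(n:ℝ) := Real.exp_injective h2
      have : (n:ℝ) = (m:ℝ) := by linarith
      exact_mod_cast this
    · intro n
      obtain ⟨h1, h2, h3⟩ := periodic_props (ptN n) (ptN_ne_zero n)
      exact ⟨ptN n, h1, h2, h3, rfl⟩
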